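/- arXiv:1302.5396 — 8 statements merged into one kernel-verified Lean document; each statement's English description precedes it below -/
import Mathlib

section
/- Let q ∈ [0,1] be a constant and let G(x) = 3x − x³ − 3 + 6q. Then: (1) if q < 1/6, G has a unique real zero x*, this zero satisfies x* < −1, and G(x) > 0 for x < x* while G(x) < 0 for x > x* (so x* is a globally asymptotically stable equilibrium of ẋ = γ·G(x) for any γ > 0); (2) if 1/6 < q < 5/6, G has exactly three real zeros x* < x° < x**, with x* < −1, −1 < x° < 1, and x** > 1, and G > 0 on (−∞, x*), G < 0 on (x*, x°), G > 0 on (x°, x**), and G < 0 on (x**, ∞) (so x* and x** are locally stable equilibria and x° is unstable); (3) if q > 5/6, G has a unique real zero x**, this zero satisfies x** > 1, and G(x) > 0 for x < x** while G(x) < 0 for x > x**. -/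
lemma ivt_pn (f : ℝ → ℝ) (hf : Continuous f) (a b : ℝ) (hab : a < b)
    (ha : 0 < f a) (hb : f b < 0) : ∃ r, a < r ∧ r < b ∧ f r = 0 := by
  obtain ⟨r, hr, hr0⟩ := intermediate_value_Icc' hab.le hf.continuousOn ⟨hb.le, ha.le⟩
  refine ⟨r, lt_of_le_of_ne hr.1 ?_, lt_of_le_of_ne hr.2 ?_, hr0⟩
  · rintro rfl; exact ha.ne' hr0
  · rintro rfl; exact hb.ne hr0

lemma ivt_np (f : ℝ → ℝ) (hf : Continuous f) (a b : ℝ) (hab : a < b)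
    (ha : f a < 0) (hb : 0 < f b) : ∃ r, a < r ∧ r < b ∧ f r = 0 := by
  obtain ⟨r, hr, hr0⟩ := intermediate_value_Icc hab.le hf.continuousOn ⟨ha.le, hb.le⟩
  refine ⟨r, lt_of_le_of_ne hr.1 ?_, lt_of_le_of_ne hr.2 ?_, hr0⟩
  · rintro rfl; exact ha.ne hr0
  · rintro rfl; exact hb.ne' hr0

/-- Proposition 1 of the paper: bifurcations of
`G(x) = 3x - x³ - 3 + 6q` for a constant `q ∈ [0,1]`. -/
theorem stmt_0 (q : ℝ) (hq0 : 0 ≤ q) (hq1 : q ≤ 1)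
    (G : ℝ → ℝ) (hG : ∀ x, G x = 3 * x - x ^ 3 - 3 + 6 * q) :
    (q < 1 / 6 →
      ∃ xs : ℝ, xs < -1 ∧ G xs = 0 ∧ (∀ x, G x = 0 → x = xs) ∧
        (∀ x, x < xs → 0 < G x) ∧ (∀ x, xs < x → G x < 0)) ∧
    (1 / 6 < q → q < 5 / 6 →
      ∃ xs xo xss : ℝ, xs < -1 ∧ -1 < xo ∧ xo < 1 ∧ 1 < xss ∧
        xs < xo ∧ xo < xss ∧
        G xs = 0 ∧ G xo = 0 ∧ G xss = 0 ∧
        (∀ x, G x = 0 → x = xs ∨ x = xo ∨ x = xss) ∧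
        (∀ x, x < xs → 0 < G x) ∧
        (∀ x, xs < x → x < xo → G x < 0) ∧
        (∀ x, xo < x → x < xss → 0 < G x) ∧
        (∀ x, xss < x → G x < 0)) ∧
    (5 / 6 < q →
      ∃ xss : ℝ, 1 < xss ∧ G xss = 0 ∧ (∀ x, G x = 0 → x = xss) ∧
        (∀ x, x < xss → 0 < G x) ∧ (∀ x, xss < x → G x < 0)) := by
  have hGe : G = fun x => 3 * x - x ^ 3 - 3 + 6 * q := funext hG
  subst hGe
  have hcont : Continuous fun x : ℝ => 3 * x - x ^ 3 - 3 + 6 * q := by continuity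
  refine ⟨?_, ?_, ?_⟩
  · -- case q < 1/6
    intro hq
    obtain ⟨xs, h3, h2, Es⟩ := ivt_pn _ hcont (-3) (-2) (by norm_num)
      (by norm_num; linarith) (by norm_num; linarith)
    have hxs2 : 4 < xs ^ 2 := by nlinarith
    refine ⟨xs, by linarith, by simpa using Es, ?_, ?_, ?_⟩
    · intro x hx
      simp only at hx
      have hfac : (x - xs) * (x ^ 2 + x * xs + xs ^ 2 - 3) = 0 := by linear_combination Es - hx
      have hQ : 0 < x ^ 2 + x * xs + xs ^ 2 - 3 := by nlinarith [sq_nonneg (2 * x + xs)]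
      rcases mul_eq_zero.mp hfac with h | h
      · linarith [sub_eq_zero.mp h]
      · linarith
    · intro x hx
      have key : 3 * x - x ^ 3 - 3 + 6 * q = (xs - x) * (x ^ 2 + x * xs + xs ^ 2 - 3) := by
        linear_combination Es
      have hQ : 0 < x ^ 2 + x * xs + xs ^ 2 - 3 := by nlinarith [sq_nonneg (2 * x + xs)]
      simpa [key] using mul_pos (by linarith : (0:ℝ) < xs - x) hQ
    · intro x hx
      have key : 3 * x - x ^ 3 - 3 + 6 * q = (xs - x) * (x ^ 2 + x * xs + xs ^ 2 - 3) := by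
        linear_combination Es
      have hQ : 0 < x ^ 2 + x * xs + xs ^ 2 - 3 := by nlinarith [sq_nonneg (2 * x + xs)]
      simp only [key]
      exact mul_neg_of_neg_of_pos (by linarith) hQ
  · -- case 1/6 < q < 5/6
    intro hq1' hq2'
    obtain ⟨xs, hs2, hs1, Es⟩ := ivt_pn _ hcont (-2) (-1) (by norm_num)
      (by norm_num; linarith) (by norm_num; linarith)
    obtain ⟨xo, ho1, ho2, Eo⟩ := ivt_np _ hcont (-1) 1 (by norm_num)
      (by norm_num; linarith) (by norm_num; linarith)
    obtain ⟨xss, hss1, hss2, Ess⟩ := ivt_pn _ hcont 1 2 (by norm_num)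
      (by norm_num; linarith) (by norm_num; linarith)
    have hso : xs < xo := by linarith
    have hoss : xo < xss := by linarith
    have e1 : xo ^ 2 + xo * xs + xs ^ 2 = 3 := by
      have h : (xo - xs) * (xo ^ 2 + xo * xs + xs ^ 2 - 3) = 0 := by linear_combination Es - Eo
      rcases mul_eq_zero.mp h with h | h
      · exact absurd (sub_eq_zero.mp h) (by linarith)
      · linarith [sub_eq_zero.mp h]
    have e2 : xss ^ 2 + xss * xs + xs ^ 2 = 3 := by
      have h : (xss - xs) * (xss ^ 2 + xss * xs + xs ^ 2 - 3) = 0 := by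
        linear_combination Es - Ess
      rcases mul_eq_zero.mp h with h | h
      · exact absurd (sub_eq_zero.mp h) (by linarith)
      · linarith [sub_eq_zero.mp h]
    have e3 : xss + xs + xo = 0 := by
      have h : (xo - xss) * (xo + xss + xs) = 0 := by linear_combination e1 - e2
      rcases mul_eq_zero.mp h with h | h
      · exact absurd (sub_eq_zero.mp h) (by linarith)
      · linarith
    have key : ∀ x : ℝ, 3 * x - x ^ 3 - 3 + 6 * q
        = -((x - xs) * (x - xo) * (x - xss)) := by
      intro x
      linear_combination (xs - x) * e1 + Es - (x - xs) * (x - xo) * e3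
    refine ⟨xs, xo, xss, by linarith, ho1, ho2, hss1, hso, hoss,
      by simpa using Es, by simpa using Eo, by simpa using Ess, ?_, ?_, ?_, ?_, ?_⟩
    · intro x hx
      simp only at hx
      rw [key x] at hx
      have h := neg_eq_zero.mp hx
      rcases mul_eq_zero.mp h with h | h
      · rcases mul_eq_zero.mp h with h | h
        · exact Or.inl (sub_eq_zero.mp h)
        · exact Or.inr (Or.inl (sub_eq_zero.mp h))
      · exact Or.inr (Or.inr (sub_eq_zero.mp h))
    · intro x hx
      simp only [key x]
      have : -((x - xs) * (x - xo) * (x - xss)) = (xs - x) * ((xo - x) * (xss - x)) := by ring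
      rw [this]
      exact mul_pos (by linarith) (mul_pos (by linarith) (by linarith))
    · intro x hx1 hx2
      simp only [key x]
      have : -((x - xs) * (x - xo) * (x - xss)) = -((x - xs) * ((xo - x) * (xss - x))) := by ring
      rw [this]
      exact neg_neg_of_pos (mul_pos (by linarith) (mul_pos (by linarith) (by linarith)))
    · intro x hx1 hx2
      simp only [key x]
      have : -((x - xs) * (x - xo) * (x - xss)) = (x - xs) * (x - xo) * (xss - x) := by ring
      rw [this]
      exact mul_pos (mul_pos (by linarith) (by linarith)) (by linarith)
    · intro x hx
      simp only [key x]
      exact neg_neg_of_pos (mul_pos (mul_pos (by linarith) (by linarith)) (by linarith))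
  · -- case 5/6 < q
    intro hq
    obtain ⟨xss, h2, h3, Es⟩ := ivt_pn _ hcont 2 3 (by norm_num)
      (by norm_num; linarith) (by norm_num; linarith)
    have hxs2 : 4 < xss ^ 2 := by nlinarith
    refine ⟨xss, by linarith, by simpa using Es, ?_, ?_, ?_⟩
    · intro x hx
      simp only at hx
      have hfac : (x - xss) * (x ^ 2 + x * xss + xss ^ 2 - 3) = 0 := by linear_combination Es - hx
      have hQ : 0 < x ^ 2 + x * xss + xss ^ 2 - 3 := by nlinarith [sq_nonneg (2 * x + xss)]
      rcases mul_eq_zero.mp hfac with h | h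
      · linarith [sub_eq_zero.mp h]
      · linarith
    · intro x hx
      have key : 3 * x - x ^ 3 - 3 + 6 * q = (xss - x) * (x ^ 2 + x * xss + xss ^ 2 - 3) := by
        linear_combination Es
      have hQ : 0 < x ^ 2 + x * xss + xss ^ 2 - 3 := by nlinarith [sq_nonneg (2 * x + xss)]
      simpa [key] using mul_pos (by linarith : (0:ℝ) < xss - x) hQ
    · intro x hx
      have key : 3 * x - x ^ 3 - 3 + 6 * q = (xss - x) * (x ^ 2 + x * xss + xss ^ 2 - 3) := by
        linear_combination Es
      have hQ : 0 < x ^ 2 + x * xss + xss ^ 2 - 3 := by nlinarith [sq_nonneg (2 * x + xss)]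
      simp only [key]
      exact mul_neg_of_neg_of_pos (by linarith) hQ
end

section
/- Let n ≥ 1, let γ₁,…,γₙ be positive reals, and let Q : ℝⁿ → [0,1]ⁿ be any continuous map. Let x : [0,∞) → ℝⁿ be differentiable and satisfy ẋᵢ(t) = γᵢ·(g(xᵢ(t)) + 6·Qᵢ(x(t))) for all t ≥ 0 and all i ∈ [n]. If xᵢ(0) ∈ [x⁻, x⁺] for all i ∈ [n], then xᵢ(t) ∈ [x⁻, x⁺] for all t ≥ 0 and all i ∈ [n]. In other words, the box [x⁻, x⁺]ⁿ is forward invariant for the system ẋᵢ = γᵢ(g(xᵢ) + 6Qᵢ(x)); applied with N = 2n variables this also gives forward invariance of [x⁻, x⁺]^{2n} for the systems D₂(f,γ). -/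
lemma xm_lt_neg_two (xm : ℝ) (hxm : 3 * xm - xm ^ 3 - 3 = 0) : xm < -2 := by
  nlinarith [sq_nonneg (xm - 1), sq_nonneg (xm + 2)]

lemma g_lt_of_gt (xm y : ℝ) (hxm : 3 * xm - xm ^ 3 - 3 = 0) (hy : -xm < y) :
    3 * y - y ^ 3 - 3 < -6 := by
  have h2 : xm < -2 := xm_lt_neg_two xm hxm
  have h1 : (0:ℝ) < y + xm := by linarith
  have h3 : (0:ℝ) < y^2 - y*xm + xm^2 - 3 := by
    nlinarith [mul_pos (show (0:ℝ) < y by linarith) (show (0:ℝ) < -xm by linarith),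
      sq_nonneg y, sq_nonneg xm]
  nlinarith [mul_pos h1 h3]

lemma g_pos_of_lt (xm y : ℝ) (hxm : 3 * xm - xm ^ 3 - 3 = 0) (hy : y < xm) :
    0 < 3 * y - y ^ 3 - 3 := by
  have h2 : xm < -2 := xm_lt_neg_two xm hxm
  have h1 : (0:ℝ) < xm - y := by linarith
  have h3 : (0:ℝ) < y^2 + y*xm + xm^2 - 3 := by
    nlinarith [mul_pos (show (0:ℝ) < -y by linarith) (show (0:ℝ) < -xm by linarith),
      sq_nonneg y, sq_nonneg xm]
  nlinarith [mul_pos h1 h3]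

/-- Proposition 2 of the paper: the box `[x⁻, x⁺]ⁿ`
(where `x⁻` is the unique real root of `3x - x³ - 3` and `x⁺ = -x⁻`)
is forward invariant for the system `ẋᵢ = γᵢ (g(xᵢ) + 6 Qᵢ(x))`. -/
theorem stmt_2 (n : ℕ) (hn : 1 ≤ n) (γ : Fin n → ℝ) (hγ : ∀ i, 0 < γ i)
    (Q : (Fin n → ℝ) → Fin n → ℝ) (hQcont : Continuous Q)
    (hQ01 : ∀ x i, Q x i ∈ Set.Icc (0 : ℝ) 1)
    (xm : ℝ) (hxm : 3 * xm - xm ^ 3 - 3 = 0)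
    (x : ℝ → Fin n → ℝ)
    (hode : ∀ i : Fin n, ∀ t : ℝ, 0 ≤ t →
      HasDerivAt (fun u => x u i)
        (γ i * ((3 * x t i - (x t i) ^ 3 - 3) + 6 * Q (x t) i)) t)
    (h0 : ∀ i, x 0 i ∈ Set.Icc xm (-xm)) :
    ∀ t : ℝ, 0 ≤ t → ∀ i, x t i ∈ Set.Icc xm (-xm) := by
  intro t ht i
  have hcont : ∀ u : ℝ, 0 ≤ u → ContinuousAt (fun u => x u i) u := fun u hu =>
    (hode i u hu).continuousAt
  have hcontOn : ∀ s : ℝ, 0 ≤ s → ContinuousOn (fun u => x u i) (Set.Icc s t) :=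
    fun s hs => fun u hu => (hcont u (le_trans hs hu.1)).continuousWithinAt
  constructor
  · -- lower bound
    by_contra h
    push_neg at h
    have ht0 : (0:ℝ) < t := by
      rcases lt_or_eq_of_le ht with h' | h'
      · exact h'
      · exfalso; rw [← h'] at h; exact absurd (h0 i).1 (not_le.2 h)
    set S : Set ℝ := {u | u ∈ Set.Icc 0 t ∧ xm ≤ x u i} with hS
    have hScl : IsClosed S := by
      have : S = Set.Icc 0 t ∩ (fun u => x u i) ⁻¹' Set.Ici xm := by
        ext u; simp [hS, Set.mem_Icc, and_comm]
      rw [this]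
      exact (hcontOn 0 le_rfl).preimage_isClosed_of_isClosed isClosed_Icc isClosed_Ici
    have hScp : IsCompact S :=
      isCompact_Icc.of_isClosed_subset hScl (fun u hu => hu.1)
    have hSne : S.Nonempty := ⟨0, ⟨le_rfl, le_of_lt ht0⟩, (h0 i).1⟩
    obtain ⟨s, hsS, hsmax⟩ := hScp.exists_isGreatest hSne
    have hs0 : 0 ≤ s := hsS.1.1
    have hst : s < t := by
      rcases lt_or_eq_of_le hsS.1.2 with h' | h'
      · exact h'
      · exfalso; rw [h'] at hsS; exact absurd hsS.2 (not_le.2 h)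
    have hgt : ∀ u, s < u → u ≤ t → x u i < xm := by
      intro u hsu hut
      by_contra hc
      push_neg at hc
      exact absurd (hsmax ⟨⟨le_trans hs0 hsu.le, hut⟩, hc⟩) (not_le.2 hsu)
    have hmono : StrictMonoOn (fun u => x u i) (Set.Icc s t) := by
      apply strictMonoOn_of_deriv_pos (convex_Icc s t) (hcontOn s hs0)
      intro u hu
      rw [interior_Icc] at hu
      have hu0 : 0 ≤ u := le_trans hs0 hu.1.le
      rw [(hode i u hu0).deriv]
      have hxu : x u i < xm := hgt u hu.1 hu.2.le
      have hg : 0 < 3 * x u i - (x u i) ^ 3 - 3 := g_pos_of_lt xm _ hxm hxu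
      have hQ := (hQ01 (x u) i).1
      have : 0 < (3 * x u i - (x u i) ^ 3 - 3) + 6 * Q (x u) i := by linarith
      exact mul_pos (hγ i) this
    have := hmono (Set.left_mem_Icc.2 hst.le) (Set.right_mem_Icc.2 hst.le) hst
    simp only at this
    have := lt_trans this (lt_of_lt_of_le h hsS.2)
    exact lt_irrefl _ this
  · -- upper bound
    by_contra h
    push_neg at h
    have ht0 : (0:ℝ) < t := by
      rcases lt_or_eq_of_le ht with h' | h'
      · exact h'
      · exfalso; rw [← h'] at h; exact absurd (h0 i).2 (not_le.2 h)
    set S : Set ℝ := {u | u ∈ Set.Icc 0 t ∧ x u i ≤ -xm} with hS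
    have hScl : IsClosed S := by
      have : S = Set.Icc 0 t ∩ (fun u => x u i) ⁻¹' Set.Iic (-xm) := by
        ext u; simp [hS, Set.mem_Icc, and_comm]
      rw [this]
      exact (hcontOn 0 le_rfl).preimage_isClosed_of_isClosed isClosed_Icc isClosed_Iic
    have hScp : IsCompact S :=
      isCompact_Icc.of_isClosed_subset hScl (fun u hu => hu.1)
    have hSne : S.Nonempty := ⟨0, ⟨le_rfl, le_of_lt ht0⟩, (h0 i).2⟩
    obtain ⟨s, hsS, hsmax⟩ := hScp.exists_isGreatest hSne
    have hs0 : 0 ≤ s := hsS.1.1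
    have hst : s < t := by
      rcases lt_or_eq_of_le hsS.1.2 with h' | h'
      · exact h'
      · exfalso; rw [h'] at hsS; exact absurd hsS.2 (not_le.2 h)
    have hgt : ∀ u, s < u → u ≤ t → -xm < x u i := by
      intro u hsu hut
      by_contra hc
      push_neg at hc
      exact absurd (hsmax ⟨⟨le_trans hs0 hsu.le, hut⟩, hc⟩) (not_le.2 hsu)
    have hmono : StrictAntiOn (fun u => x u i) (Set.Icc s t) := by
      apply strictAntiOn_of_deriv_neg (convex_Icc s t) (hcontOn s hs0)
      intro u hu
      rw [interior_Icc] at hu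
      have hu0 : 0 ≤ u := le_trans hs0 hu.1.le
      rw [(hode i u hu0).deriv]
      have hxu : -xm < x u i := hgt u hu.1 hu.2.le
      have hg : 3 * x u i - (x u i) ^ 3 - 3 < -6 := g_lt_of_gt xm _ hxm hxu
      have hQ := (hQ01 (x u) i).2
      have : (3 * x u i - (x u i) ^ 3 - 3) + 6 * Q (x u) i < 0 := by linarith
      exact mul_neg_of_pos_of_neg (hγ i) this
    have := hmono (Set.left_mem_Icc.2 hst.le) (Set.right_mem_Icc.2 hst.le) hst
    simp only at this
    have := lt_trans (lt_of_le_of_lt hsS.2 h) this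
    exact lt_irrefl _ this
end

section
/- Let f : {0,1}ⁿ → {0,1}ⁿ and let (σ(τ))_{τ≥0} be a sequence of Boolean states such that: (i) for every τ ≥ 0 and every i ∈ [n], σ(τ+1)ᵢ = fᵢ(σ(τ)) or σ(τ+1)ᵢ = σ(τ)ᵢ; and (ii) for every τ ≥ 0, σ(τ+1) = σ(τ) if and only if σ(τ) is a fixed point of f (i.e., f(σ(τ)) = σ(τ)). If the trajectory of σ(0) under f is one-stepping, then σ(τ) = f^τ(σ(0)) for all τ ≥ 0. -/
/-- a Boolean itinerary that is consistent with `f`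
(conditions (i) and (ii)) and starts at a state whose trajectory under `f`
is one-stepping must be strongly consistent, i.e. equal to the `f`-trajectory. -/
theorem stmt_3 (n : ℕ) (f : (Fin n → Bool) → Fin n → Bool)
    (σ : ℕ → Fin n → Bool)
    (hi : ∀ τ i, σ (τ + 1) i = f (σ τ) i ∨ σ (τ + 1) i = σ τ i)
    (hii : ∀ τ, σ (τ + 1) = σ τ ↔ f (σ τ) = σ τ)
    (hone : ∀ τ, hammingDist (f^[τ] (σ 0)) (f^[τ + 1] (σ 0)) ≤ 1) :
    ∀ τ, σ τ = f^[τ] (σ 0) := by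
  intro τ
  induction τ with
  | zero => simp
  | succ τ ih =>
    have hstep : f^[τ + 1] (σ 0) = f (σ τ) := by
      rw [Function.iterate_succ_apply', ih]
    rw [hstep]
    by_cases hfix : f (σ τ) = σ τ
    · rw [(hii τ).2 hfix, hfix]
    · have hne : σ (τ + 1) ≠ σ τ := fun h => hfix ((hii τ).1 h)
      obtain ⟨i, hi0⟩ := Function.ne_iff.1 hne
      have hd : hammingDist (σ τ) (f (σ τ)) ≤ 1 := by
        have := hone τ
        rwa [Function.iterate_succ_apply', ← ih] at this
      have hiF : σ (τ + 1) i = f (σ τ) i := by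
        rcases hi τ i with h | h
        · exact h
        · exact absurd h hi0
      have hifne : f (σ τ) i ≠ σ τ i := hiF ▸ hi0
      funext j
      rcases hi τ j with h | h
      · exact h
      · -- σ (τ+1) j = σ τ j; need σ τ j = f (σ τ) j
        by_cases hj : j = i
        · subst hj; exact absurd h hi0
        · -- hamming dist ≤ 1, i is in the diff set, so j isn't
          by_contra hc
          have hjne : σ τ j ≠ f (σ τ) j := fun he => hc (h.trans he)
          have : ({i, j} : Finset (Fin n)) ⊆ Finset.univ.filter (fun k => σ τ k ≠ f (σ τ) k) := by
            intro k hk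
            simp only [Finset.mem_insert, Finset.mem_singleton] at hk
            simp only [Finset.mem_filter, Finset.mem_univ, true_and]
            rcases hk with rfl | rfl
            · exact hifne.symm
            · exact hjne
          have h2 : ({i, j} : Finset (Fin n)).card = 2 := by
            rw [Finset.card_insert_of_notMem (by simpa using fun he => hj he.symm),
              Finset.card_singleton]
          have hle := Finset.card_le_card this
          rw [h2] at hle
          have hdd : (Finset.univ.filter (fun k => σ τ k ≠ f (σ τ) k)).card ≤ 1 := by
            simpa [hammingDist, Finset.filter] using hd
          omega
end

section
/- Let n ≥ 1, let I ⊆ [n] have odd cardinality, and define f : {0,1}ⁿ → {0,1}ⁿ by fᵢ(s) = 1 − s_{i−1} if i ∈ I and fᵢ(s) = s_{i−1} if i ∉ I, where indices are cyclic (the index i − 1 is taken to be n when i = 1). Then the Boolean system ({0,1}ⁿ, f) has exactly one one-stepping orbit, and this orbit has length 2n. That is: there exists s₀ ∈ {0,1}ⁿ such that the trajectory of s₀ under f is one-stepping, f^{2n}(s₀) = s₀, the orbit {f^τ(s₀) : τ ≥ 0} has exactly 2n elements, and every s ∈ {0,1}ⁿ whose trajectory under f is one-stepping belongs to this orbit.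 -/
section StmtSix

open Fin.NatCast Fin.CommRing

variable {n : ℕ} [NeZero n]

private lemma valSubOne (a : Fin n) :
    ((a - 1 : Fin n) : ℕ) = if a = 0 then n - 1 else a.val - 1 := by
  obtain ⟨m, rfl⟩ := Nat.exists_eq_succ_of_ne_zero (NeZero.ne n)
  rw [Fin.coe_sub_one]
  simp

private def cB (I : Finset (Fin n)) : Fin n → Bool := fun i => decide (i ∈ I)

private def bsum (I : Finset (Fin n)) : ℕ → Fin n → Bool
  | 0, _ => false
  | (τ+1), i => xor (cB I i) (bsum I τ (i - 1))

private lemma bsum_zero (I : Finset (Fin n)) (i : Fin n) : bsum I 0 i = false := rfl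

private lemma bsum_succ (I : Finset (Fin n)) (τ : ℕ) (i : Fin n) :
    bsum I (τ + 1) i = xor (cB I i) (bsum I τ (i - 1)) := rfl

private def bZ : Bool → ZMod 2 := fun b => if b then 1 else 0

private lemma bZ_xor (a b : Bool) : bZ (xor a b) = bZ a + bZ b := by
  cases a <;> cases b <;> decide

private lemma bZ_bsum (I : Finset (Fin n)) (τ : ℕ) (i : Fin n) :
    bZ (bsum I τ i) = ∑ k ∈ Finset.range τ, bZ (cB I (i - (k : Fin n))) := by
  induction τ generalizing i with
  | zero => simp [bsum_zero, bZ]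
  | succ τ ih =>
      rw [bsum_succ, bZ_xor, ih (i - 1), Finset.sum_range_succ', add_comm]
      congr 1
      · apply Finset.sum_congr rfl
        intro k _
        congr 2
        push_cast
        ring
      · congr 1
        push_cast
        ring

private lemma bsum_n (I : Finset (Fin n)) (hI : Odd I.card) (i : Fin n) :
    bsum I n i = true := by
  have h1 : bZ (bsum I n i) = 1 := by
    rw [bZ_bsum]
    have h2 : ∑ k ∈ Finset.range n, bZ (cB I (i - (k : Fin n)))
        = ∑ k : Fin n, bZ (cB I (i - k)) := by
      rw [Finset.sum_range]
      apply Finset.sum_congr rfl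
      intro k _
      rw [Fin.cast_val_eq_self]
    have h4 := Equiv.sum_comp (Equiv.subLeft i) (fun j => bZ (cB I j))
    simp only [Equiv.subLeft_apply] at h4
    rw [h2, h4]
    have h3 : ∑ j : Fin n, bZ (cB I j) = (I.card : ZMod 2) := by
      simp only [bZ, cB, decide_eq_true_eq]
      rw [Finset.sum_boole]
      simp [Finset.filter_mem_eq_inter]
    rw [h3, ← ZMod.natCast_mod, Nat.odd_iff.mp hI]
    rfl
  cases h : bsum I n i
  · rw [h] at h1; exact absurd h1 (by decide)
  · rfl

variable {I : Finset (Fin n)} {f : (Fin n → Bool) → Fin n → Bool}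

private lemma iter_formula (hf' : ∀ s i, f s i = xor (cB I i) (s (i - 1)))
    (τ : ℕ) (s : Fin n → Bool) (i : Fin n) :
    f^[τ] s i = xor (bsum I τ i) (s (i - (τ : Fin n))) := by
  induction τ generalizing i with
  | zero => simp [bsum_zero]
  | succ τ ih =>
      rw [Function.iterate_succ_apply', hf', ih, bsum_succ, Bool.xor_assoc]
      congr 2
      push_cast
      ring

private lemma iter_n (hf' : ∀ s i, f s i = xor (cB I i) (s (i - 1)))
    (hI : Odd I.card) (s : Fin n → Bool) :
    f^[n] s = fun i => !(s i) := by
  funext i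
  rw [iter_formula hf', bsum_n I hI, Fin.natCast_self, sub_zero, Bool.true_xor]

private lemma iter_2n (hf' : ∀ s i, f s i = xor (cB I i) (s (i - 1)))
    (hI : Odd I.card) (s : Fin n → Bool) :
    f^[2 * n] s = s := by
  have h : 2 * n = n + n := by ring
  rw [h, Function.iterate_add_apply, iter_n hf' hI, iter_n hf' hI]
  simp

private lemma f_inj (hf' : ∀ s i, f s i = xor (cB I i) (s (i - 1)))
    (hI : Odd I.card) : Function.Injective f := by
  intro a b h
  have hn : 2 * n = (2 * n - 1) + 1 := by have := Nat.pos_of_neZero n; omega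
  have ha := iter_2n hf' hI a
  have hb := iter_2n hf' hI b
  rw [hn, Function.iterate_succ_apply, h] at ha
  rw [hn, Function.iterate_succ_apply] at hb
  rw [← ha]; exact hb

private lemma xor_cancel_ne (c x y : Bool) : (xor c x ≠ xor c y) ↔ x ≠ y := by
  cases c <;> simp

/-- the defect set -/
private def D (f : (Fin n → Bool) → Fin n → Bool) (s : Fin n → Bool) : Finset (Fin n) :=
  Finset.univ.filter (fun i => s i ≠ f s i)

omit [NeZero n] in
private lemma dist_eq_cardD (s : Fin n → Bool) :
    hammingDist s (f s) = (D f s).card := rfl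

omit [NeZero n] in
private lemma mem_D (s : Fin n → Bool) (i : Fin n) : i ∈ D f s ↔ s i ≠ f s i := by
  simp [D]

private lemma mem_D_f (hf' : ∀ s i, f s i = xor (cB I i) (s (i - 1)))
    (s : Fin n → Bool) (i : Fin n) : i ∈ D f (f s) ↔ (i - 1) ∈ D f s := by
  rw [mem_D, mem_D]
  rw [hf' (f s) i, hf' s i]
  exact xor_cancel_ne _ _ _

private lemma mem_D_iter (hf' : ∀ s i, f s i = xor (cB I i) (s (i - 1)))
    (τ : ℕ) (s : Fin n → Bool) (i : Fin n) :
    i ∈ D f (f^[τ] s) ↔ (i - (τ : Fin n)) ∈ D f s := by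
  induction τ generalizing i with
  | zero => simp
  | succ τ ih =>
      have hcast : i - ((τ + 1 : ℕ) : Fin n) = (i - 1) - (τ : Fin n) := by
        push_cast
        ring
      rw [Function.iterate_succ_apply', mem_D_f hf', ih, hcast]

private lemma D_nonempty (hf' : ∀ s i, f s i = xor (cB I i) (s (i - 1)))
    (hI : Odd I.card) (s : Fin n → Bool) : (D f s).Nonempty := by
  rw [Finset.nonempty_iff_ne_empty]
  intro h
  have hfix : f s = s := by
    funext i
    have h2 : i ∉ D f s := by rw [h]; exact Finset.notMem_empty i
    rw [mem_D] at h2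
    exact (not_ne_iff.mp h2).symm
  have h2 : f^[n] s = s := Function.iterate_fixed hfix n
  rw [iter_n hf' hI] at h2
  have h3 := congrFun h2 0
  simp at h3

/-- base state with defect at 0 -/
private def s0 (I : Finset (Fin n)) : Fin n → Bool := fun i => bsum I i.val i

private lemma D_s0 (hf' : ∀ s i, f s i = xor (cB I i) (s (i - 1)))
    (hI : Odd I.card) (i : Fin n) : i ∈ D f (s0 I) ↔ i = 0 := by
  rw [mem_D, hf']
  by_cases h : i = 0
  · subst h
    simp only [eq_self_iff_true, iff_true]
    have hv : ((0 - 1 : Fin n) : ℕ) = n - 1 := by rw [valSubOne]; simp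
    have hs : s0 I (0 - 1) = bsum I (n - 1) (0 - 1) := by
      show bsum I ((0 - 1 : Fin n) : ℕ) (0 - 1) = _
      rw [hv]
    have hbn2 : xor (cB I 0) (bsum I (n - 1) ((0 : Fin n) - 1)) = true := by
      rw [← bsum_succ, show n - 1 + 1 = n by have := Nat.pos_of_neZero n; omega]
      exact bsum_n I hI (0 : Fin n)
    show (false : Bool) ≠ xor (cB I 0) (s0 I (0 - 1))
    rw [hs, hbn2]
    simp
  · simp only [h, iff_false, not_ne_iff]
    have hv : ((i - 1 : Fin n) : ℕ) = i.val - 1 := by rw [valSubOne, if_neg h]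
    have hs : s0 I (i - 1) = bsum I (i.val - 1) (i - 1) := by
      show bsum I ((i - 1 : Fin n) : ℕ) (i - 1) = _
      rw [hv]
    rw [hs]
    have hpos : 0 < i.val := by
      rcases Nat.eq_zero_or_pos i.val with hp | hp
      · exact absurd (Fin.ext hp) h
      · exact hp
    have hi : i.val = (i.val - 1) + 1 := by omega
    have hstep : bsum I i.val i = xor (cB I i) (bsum I (i.val - 1) (i - 1)) := by
      conv_lhs => rw [hi]
      exact bsum_succ I (i.val - 1) i
    exact hstep

private lemma xor_eq_of (c x y u v : Bool) (hx : x = xor c u) (hy : y = xor c v) :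
    xor x y = xor u v := by
  subst hx hy; cases c <;> cases u <;> cases v <;> decide

private lemma uniq (hf' : ∀ s i, f s i = xor (cB I i) (s (i - 1)))
    {s t : Fin n → Bool} {j : Fin n}
    (hs : ∀ i, i ∈ D f s → i = j) (ht : ∀ i, i ∈ D f t → i = j) :
    s = t ∨ s = fun i => !(t i) := by
  have key : ∀ k : ℕ, k < n →
      xor (s (j + (k : Fin n))) (t (j + (k : Fin n))) = xor (s j) (t j) := by
    intro k hk
    induction k with
    | zero => simp
    | succ k ih =>
        have hk' : k < n := by omega
        set i : Fin n := j + ((k + 1 : ℕ) : Fin n) with hi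
        have hne : i ≠ j := by
          intro hh
          have h0 : ((k + 1 : ℕ) : Fin n) = 0 := by
            have h1 : j + ((k + 1 : ℕ) : Fin n) = j + 0 := by rw [add_zero]; exact hh
            exact add_left_cancel h1
          have h1 := congrArg Fin.val h0
          rw [Fin.val_cast_of_lt hk, Fin.val_zero] at h1
          omega
        have hsc : s i = xor (cB I i) (s (i - 1)) := by
          have hni : i ∉ D f s := fun hmem => hne (hs i hmem)
          rw [mem_D, not_ne_iff] at hni
          rw [hni, hf']
        have htc : t i = xor (cB I i) (t (i - 1)) := by
          have hni : i ∉ D f t := fun hmem => hne (ht i hmem)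
          rw [mem_D, not_ne_iff] at hni
          rw [hni, hf']
        have hsub : i - 1 = j + (k : Fin n) := by
          rw [hi]
          push_cast
          ring
        rw [xor_eq_of (cB I i) (s i) (t i) (s (i - 1)) (t (i - 1)) hsc htc, hsub]
        exact ih hk'
  have all : ∀ i : Fin n, xor (s i) (t i) = xor (s j) (t j) := by
    intro i
    have hlt : (i - j).val < n := (i - j).isLt
    have := key (i - j).val hlt
    rwa [Fin.cast_val_eq_self, add_sub_cancel] at this
  cases hj : xor (s j) (t j)
  · left
    funext i
    have h2 := all i
    rw [hj] at h2
    cases hsi : s i <;> cases hti : t i <;> rw [hsi, hti] at h2 <;> simp_all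
  · right
    funext i
    have h2 := all i
    rw [hj] at h2
    cases hsi : s i <;> cases hti : t i <;> rw [hsi, hti] at h2 <;> simp_all

end StmtSix

section Main
open Fin.NatCast Fin.CommRing
variable {n : ℕ} [NeZero n] {I : Finset (Fin n)} {f : (Fin n → Bool) → Fin n → Bool}

private lemma dist_f (hf' : ∀ s i, f s i = xor (cB I i) (s (i - 1)))
    (a b : Fin n → Bool) : hammingDist (f a) (f b) = hammingDist a b := by
  show (Finset.univ.filter fun i => f a i ≠ f b i).card
      = (Finset.univ.filter fun i => a i ≠ b i).card
  refine Finset.card_bij' (fun i _ => i - 1) (fun i _ => i + 1) ?_ ?_ ?_ ?_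
  · intro i hi
    simp only [Finset.mem_filter, Finset.mem_univ, true_and] at hi ⊢
    rw [hf', hf', xor_cancel_ne] at hi
    exact hi
  · intro i hi
    simp only [Finset.mem_filter, Finset.mem_univ, true_and] at hi ⊢
    rw [hf', hf', xor_cancel_ne, add_sub_cancel_right]
    exact hi
  · intro i _
    exact sub_add_cancel i 1
  · intro i _
    exact add_sub_cancel_right i 1

private lemma dist_iter (hf' : ∀ s i, f s i = xor (cB I i) (s (i - 1)))
    (τ : ℕ) (a b : Fin n → Bool) :
    hammingDist (f^[τ] a) (f^[τ] b) = hammingDist a b := by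
  induction τ with
  | zero => simp
  | succ τ ih => rw [Function.iterate_succ_apply', Function.iterate_succ_apply',
      dist_f hf', ih]

end Main

/-- Example 4.2(ii) of the paper: for the cyclic-shift-with-
negations map `fᵢ(s) = ¬s_{i-1}` (for `i ∈ I`) resp. `s_{i-1}` (otherwise),
with `|I|` odd and cyclic indices, the Boolean system has exactly one
one-stepping orbit, and this orbit has length `2n`. -/
theorem stmt_6 (n : ℕ) [NeZero n] (I : Finset (Fin n)) (hI : Odd I.card)
    (f : (Fin n → Bool) → Fin n → Bool)
    (hf : ∀ (s : Fin n → Bool) (i : Fin n),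
      f s i = if i ∈ I then !(s (i - 1)) else s (i - 1)) :
    ∃ s0 : Fin n → Bool,
      (∀ τ, hammingDist (f^[τ] s0) (f^[τ + 1] s0) ≤ 1) ∧
      f^[2 * n] s0 = s0 ∧
      (Set.range fun τ : ℕ => f^[τ] s0).ncard = 2 * n ∧
      (∀ s : Fin n → Bool,
        (∀ τ, hammingDist (f^[τ] s) (f^[τ + 1] s) ≤ 1) →
        ∃ τ : ℕ, f^[τ] s0 = s) := by
  have hf' : ∀ s i, f s i = xor (cB I i) (s (i - 1)) := by
    intro s i
    rw [hf]
    by_cases h : i ∈ I <;> simp [cB, h]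
  have hnpos := Nat.pos_of_neZero n
  have hD0 : D f (s0 I) = {0} := by
    ext i
    rw [D_s0 hf' hI, Finset.mem_singleton]
  have h2n : f^[2 * n] (s0 I) = s0 I := iter_2n hf' hI _
  have hper : ∀ q r, f^[2 * n * q + r] (s0 I) = f^[r] (s0 I) := by
    intro q r
    induction q with
    | zero => simp
    | succ q ih =>
        have he : 2 * n * (q + 1) + r = (2 * n * q + r) + 2 * n := by ring
        rw [he, Function.iterate_add_apply, h2n, ih]
  have hmod : ∀ τ, f^[τ] (s0 I) = f^[τ % (2 * n)] (s0 I) := by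
    intro τ
    conv_lhs => rw [← Nat.div_add_mod τ (2 * n)]
    exact hper (τ / (2 * n)) (τ % (2 * n))
  have hcore : ∀ d, d < 2 * n → f^[d] (s0 I) = s0 I → d = 0 := by
    intro d hd hfd
    by_contra hd0
    have h0mem : (0 : Fin n) ∈ D f (s0 I) := (D_s0 hf' hI 0).mpr rfl
    have hmem := (mem_D_iter hf' d (s0 I) 0)
    rw [hfd] at hmem
    have hsub := (D_s0 hf' hI _).mp (hmem.mp h0mem)
    open Fin.NatCast in
    have hdz : ((d : ℕ) : Fin n) = 0 := by
      have := sub_eq_zero.mp hsub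
      rw [← this]
    have hdvd : n ∣ d := by
      have hval := congrArg Fin.val hdz
      rw [Fin.val_natCast, Fin.val_zero] at hval
      exact Nat.dvd_of_mod_eq_zero hval
    have hdn : d = n := by
      rcases hdvd with ⟨c, rfl⟩
      rcases c with _ | _ | c
      · omega
      · omega
      · have he2 : n * (c + 1 + 1) = n * c + 2 * n := by ring
        omega
    rw [hdn, iter_n hf' hI] at hfd
    have := congrFun hfd 0
    simp at this
  have hinj : ∀ a, a < 2 * n → ∀ b, b < 2 * n → f^[a] (s0 I) = f^[b] (s0 I) → a = b := by
    have key : ∀ a b, a ≤ b → b < 2 * n → f^[a] (s0 I) = f^[b] (s0 I) → a = b := by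
      intro a b hab hb h
      have hsplit : f^[a] (f^[b - a] (s0 I)) = f^[a] (s0 I) := by
        rw [← Function.iterate_add_apply, show a + (b - a) = b by omega, h]
      have := (f_inj hf' hI).iterate a hsplit
      have := hcore (b - a) (by omega) this
      omega
    intro a ha b hb h
    rcases le_total a b with hab | hab
    · exact key a b hab hb h
    · exact (key b a hab ha h.symm).symm
  refine ⟨s0 I, ?_, h2n, ?_, ?_⟩
  · intro τ
    rw [Function.iterate_succ_apply, dist_iter hf', dist_eq_cardD, hD0]
    simp
  · have hrange : (Set.range fun τ : ℕ => f^[τ] (s0 I))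
        = ↑((Finset.range (2 * n)).image fun τ => f^[τ] (s0 I)) := by
      ext x
      simp only [Set.mem_range, Finset.coe_image, Set.mem_image, Finset.mem_coe,
        Finset.mem_range]
      constructor
      · rintro ⟨τ, rfl⟩
        exact ⟨τ % (2 * n), Nat.mod_lt _ (by omega), (hmod τ).symm⟩
      · rintro ⟨τ, _, h⟩
        exact ⟨τ, h⟩
    rw [hrange, Set.ncard_coe_finset, Finset.card_image_of_injOn, Finset.card_range]
    intro a ha b hb h
    exact hinj a (Finset.mem_range.mp ha) b (Finset.mem_range.mp hb) h
  · intro s hone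
    have h0 := hone 0
    simp only [Function.iterate_zero, id_eq, zero_add, Function.iterate_one] at h0
    rw [dist_eq_cardD] at h0
    have hne := D_nonempty hf' hI s
    have hcard : (D f s).card = 1 := le_antisymm h0 (Finset.Nonempty.card_pos hne)
    obtain ⟨j, hj⟩ := Finset.card_eq_one.mp hcard
    have hsj : ∀ i, i ∈ D f s → i = j := by
      intro i hi
      rw [hj, Finset.mem_singleton] at hi
      exact hi
    have huj : ∀ i, i ∈ D f (f^[j.val] (s0 I)) → i = j := by
      intro i hi
      rw [mem_D_iter hf'] at hi
      have h2 := (D_s0 hf' hI _).mp hi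
      rw [Fin.cast_val_eq_self] at h2
      exact sub_eq_zero.mp h2
    rcases uniq hf' huj hsj with h | h
    · exact ⟨j.val, h⟩
    · refine ⟨n + j.val, ?_⟩
      rw [Function.iterate_add_apply, iter_n hf' hI]
      funext i
      rw [congrFun h i]
      simp
end

section
/- Let G(x) = g(x) + 6·L(x)·(1 − L(x)). Then G(x) > 0 for all x < x⁻, G(x⁻) = 0, and G(x) < 0 for all x > x⁻, where x⁻ is the unique real root of g. Consequently, for every γ > 0, x⁻ is the unique and globally asymptotically stable equilibrium of the scalar ODE ẋ = γ·G(x). -/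
/-- The cubic `g(x) = 3x - x³ - 3`. -/
noncomputable def gcub (x : ℝ) : ℝ := 3 * x - x ^ 3 - 3
/-- The piecewise linear function `L`. -/
noncomputable def Lpl (x : ℝ) : ℝ := if x ≤ -1 then 0 else if x < 1 then (x + 1) / 2 else 1

lemma Lpl_eq (x : ℝ) : Lpl x = max 0 (min 1 ((x + 1) / 2)) := by
  unfold Lpl
  split_ifs with h1 h2
  · rw [min_eq_right (by linarith), max_eq_left (by linarith)]
  · rw [min_eq_right (by linarith), max_eq_right (by linarith)]
  · rw [min_eq_left (by linarith), max_eq_right (by norm_num)]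

lemma Lpl_cont : Continuous Lpl := by
  have : Lpl = fun x => max 0 (min 1 ((x + 1) / 2)) := funext Lpl_eq
  rw [this]
  exact continuous_const.max (continuous_const.min (by continuity))

lemma xm_lt_neg2 {xm : ℝ} (hxm : gcub xm = 0) : xm < -2 := by
  by_contra h
  push_neg at h
  have := mul_nonneg (sq_nonneg (xm - 1)) (by linarith : (0:ℝ) ≤ xm + 2)
  unfold gcub at hxm
  nlinarith

lemma gcub_pos {xm x : ℝ} (hxm : gcub xm = 0) (hx : x < xm) : 0 < gcub x := by
  have h2 := xm_lt_neg2 hxm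
  have hS : 0 < x^2 + x*xm + xm^2 - 3 := by nlinarith [sq_nonneg (2*x + xm)]
  have := mul_pos (by linarith : (0:ℝ) < xm - x) hS
  unfold gcub at *
  nlinarith

lemma gcub_neg_low {xm x : ℝ} (hxm : gcub xm = 0) (hx : xm < x) (hx1 : x ≤ -1) :
    gcub x < 0 := by
  have h2 := xm_lt_neg2 hxm
  have hS : 0 < x^2 + x*xm + xm^2 - 3 := by nlinarith [sq_nonneg (2*x + xm)]
  have := mul_pos (by linarith : (0:ℝ) < x - xm) hS
  unfold gcub at *
  nlinarith

lemma helper_antitone {f f' : ℝ → ℝ} (hf : ∀ t : ℝ, 0 ≤ t → HasDerivAt f (f' t) t)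
    (h0 : ∀ t : ℝ, 0 ≤ t → f' t ≤ 0) : AntitoneOn f (Set.Ici 0) := by
  apply antitoneOn_of_deriv_nonpos (convex_Ici 0)
  · intro t ht
    exact (hf t ht).continuousAt.continuousWithinAt
  · intro t ht
    rw [interior_Ici] at ht
    exact (hf t ht.le).differentiableAt.differentiableWithinAt
  · intro t ht
    rw [interior_Ici] at ht
    rw [(hf t ht.le).deriv]
    exact h0 t ht.le

/-- equation (18) of the paper: for
`G(x) = g(x) + 6 L(x)(1 - L(x))` we have `G > 0` below `x⁻`, `G(x⁻) = 0`, and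
`G < 0` above `x⁻`, where `x⁻` is the unique real root of `g`.  Consequently,
for every `γ > 0`, `x⁻` is the unique equilibrium of `ẋ = γ G(x)` and it is
globally attracting. -/
theorem stmt_15 (xm : ℝ) (hxm : gcub xm = 0) (hxmu : ∀ z, gcub z = 0 → z = xm)
    (G : ℝ → ℝ) (hG : ∀ x, G x = gcub x + 6 * Lpl x * (1 - Lpl x)) :
    (∀ x, x < xm → 0 < G x) ∧ G xm = 0 ∧ (∀ x, xm < x → G x < 0) ∧
    ∀ γ : ℝ, 0 < γ →
      (∀ z : ℝ, γ * G z = 0 ↔ z = xm) ∧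
      (∀ x : ℝ → ℝ, (∀ t : ℝ, 0 ≤ t → HasDerivAt x (γ * G (x t)) t) →
        Filter.Tendsto x Filter.atTop (nhds xm)) := by
  have hxm2 := xm_lt_neg2 hxm
  -- G positive below xm
  have hGpos : ∀ x, x < xm → 0 < G x := by
    intro x hx
    rw [hG x]
    have hL : Lpl x = 0 := by unfold Lpl; rw [if_pos (by linarith)]
    rw [hL]
    have := gcub_pos hxm hx
    ring_nf
    ring_nf at this
    linarith
  -- G zero at xm
  have hGzero : G xm = 0 := by
    rw [hG xm]
    have hL : Lpl xm = 0 := by unfold Lpl; rw [if_pos (by linarith)]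
    rw [hL, hxm]; ring
  -- G negative above xm
  have hGneg : ∀ x, xm < x → G x < 0 := by
    intro x hx
    rw [hG x]
    unfold Lpl
    split_ifs with h1 h2
    · have := gcub_neg_low hxm hx h1
      unfold gcub at this ⊢
      nlinarith
    · push_neg at h1
      unfold gcub
      nlinarith [mul_pos (by linarith : (0:ℝ) < x + 1) (by linarith : (0:ℝ) < 1 - x),
        sq_nonneg (x - 1/2), sq_nonneg (x - 3/5), sq_nonneg x, sq_nonneg (x-1)]
    · push_neg at h2
      unfold gcub
      nlinarith [mul_nonneg (sq_nonneg (x - 1)) (by linarith : (0:ℝ) ≤ x + 2)]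
  refine ⟨hGpos, hGzero, hGneg, ?_⟩
  intro γ hγ
  have hGc : Continuous G := by
    have : G = fun x => gcub x + 6 * Lpl x * (1 - Lpl x) := funext hG
    rw [this]
    have hgc : Continuous gcub := by unfold gcub; continuity
    exact (hgc.add
      (((continuous_const.mul Lpl_cont)).mul (continuous_const.sub Lpl_cont)))
  constructor
  · intro z
    constructor
    · intro h
      have hGz : G z = 0 := by
        rcases mul_eq_zero.1 h with h' | h'
        · exact absurd h' (ne_of_gt hγ)
        · exact h'
      rcases lt_trichotomy z xm with h1 | h1 | h1
      · exact absurd hGz (ne_of_gt (hGpos z h1))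
      · exact h1
      · exact absurd hGz (ne_of_lt (hGneg z h1))
    · intro h; rw [h, hGzero]; ring
  · intro x hx
    rw [Metric.tendsto_atTop]
    intro ε hε
    -- |x t - xm| is (weakly) decreasing in t ≥ 0
    have hV : AntitoneOn (fun t => (x t - xm)^2) (Set.Ici 0) := by
      apply helper_antitone (f' := fun t => 2 * (x t - xm)^1 * (γ * G (x t)))
      · intro t ht
        exact ((hx t ht).sub_const xm).pow 2
      · intro t ht
        simp only [pow_one]
        rcases lt_trichotomy (x t) xm with h1 | h1 | h1
        · nlinarith [mul_pos hγ (hGpos (x t) h1)]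
        · rw [h1]; simp
        · nlinarith [mul_neg_of_pos_of_neg hγ (hGneg (x t) h1)]
    have habs : ∀ s t : ℝ, 0 ≤ s → s ≤ t → |x t - xm| ≤ |x s - xm| := by
      intro s t hs hst
      have h := hV (Set.mem_Ici.2 hs) (Set.mem_Ici.2 (hs.trans hst)) hst
      simp only at h
      nlinarith [abs_nonneg (x t - xm), abs_nonneg (x s - xm), sq_abs (x t - xm),
        sq_abs (x s - xm)]
    have key : ∃ T : ℝ, 0 ≤ T ∧ |x T - xm| < ε := by
      by_contra hcon
      push_neg at hcon
      set R := |x 0 - xm| with hRdef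
      have hR : ∀ t : ℝ, 0 ≤ t → |x t - xm| ≤ R := fun t ht => habs 0 t le_rfl ht
      have hne : ∀ t : ℝ, 0 ≤ t → x t ≠ xm := by
        intro t ht h
        have := hcon t ht
        rw [h] at this
        simp at this
        linarith
      have hcontOn : ∀ t : ℝ, 0 ≤ t → ContinuousOn x (Set.Icc 0 t) := by
        intro t _ s hs
        exact ((hx s hs.1).continuousAt).continuousWithinAt
      rcases (hne 0 le_rfl).lt_or_gt with hlt | hgt
      · -- x 0 < xm : solution stays below xm
        have hsign : ∀ t : ℝ, 0 ≤ t → x t < xm := by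
          intro t ht
          by_contra hc
          push_neg at hc
          have hmem : xm ∈ Set.Icc (x 0) (x t) := ⟨hlt.le, hc⟩
          obtain ⟨s, hs, hxs⟩ := intermediate_value_Icc ht (hcontOn t ht) hmem
          exact hne s hs.1 hxs
        have hmem : ∀ t : ℝ, 0 ≤ t → x t ∈ Set.Icc (xm - R) (xm - ε) := by
          intro t ht
          have h1 := hR t ht
          have h2 := hcon t ht
          have h3 := hsign t ht
          rw [abs_of_neg (by linarith)] at h1 h2
          exact ⟨by linarith, by linarith⟩
        obtain ⟨y, hy, hymin⟩ := (isCompact_Icc : IsCompact (Set.Icc (xm - R) (xm - ε))).exists_isMinOn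
          ⟨x 0, hmem 0 le_rfl⟩ hGc.continuousOn
        have hδ : 0 < G y := hGpos y (by have := hy.2; linarith)
        have hA : AntitoneOn (fun t => γ * G y * t - x t) (Set.Ici 0) := by
          apply helper_antitone (f' := fun t => γ * G y - γ * G (x t))
          · intro t ht
            have h1 : HasDerivAt (fun s : ℝ => γ * G y * s) (γ * G y) t := by
              simpa using (hasDerivAt_id t).const_mul (γ * G y)
            exact h1.sub (hx t ht)
          · intro t ht
            have := hymin (hmem t ht)
            simp only [Set.mem_setOf_eq] at this
            nlinarith
        set T := (xm - x 0) / (γ * G y) with hTdef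
        have hgy : 0 < γ * G y := mul_pos hγ hδ
        have hT : 0 ≤ T := div_nonneg (by linarith) hgy.le
        have h := hA (Set.mem_Ici.2 (le_refl (0:ℝ))) (Set.mem_Ici.2 hT) hT
        simp only at h
        have hne0 : γ * G y ≠ 0 := by positivity
        have hTe : γ * G y * T = xm - x 0 := by
          rw [hTdef]; field_simp
        rw [hTe] at h
        have := hsign T hT
        linarith
      · -- x 0 > xm : solution stays above xm
        have hsign : ∀ t : ℝ, 0 ≤ t → xm < x t := by
          intro t ht
          by_contra hc
          push_neg at hc
          have hmem : xm ∈ Set.Icc (x t) (x 0) := ⟨hc, hgt.le⟩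
          obtain ⟨s, hs, hxs⟩ := intermediate_value_Icc' ht (hcontOn t ht) hmem
          exact hne s hs.1 hxs
        have hmem : ∀ t : ℝ, 0 ≤ t → x t ∈ Set.Icc (xm + ε) (xm + R) := by
          intro t ht
          have h1 := hR t ht
          have h2 := hcon t ht
          have h3 := hsign t ht
          rw [abs_of_pos (by linarith)] at h1 h2
          exact ⟨by linarith, by linarith⟩
        obtain ⟨y, hy, hymax⟩ := (isCompact_Icc : IsCompact (Set.Icc (xm + ε) (xm + R))).exists_isMaxOn
          ⟨x 0, hmem 0 le_rfl⟩ hGc.continuousOn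
        have hδ : G y < 0 := hGneg y (by have := hy.1; linarith)
        have hA : AntitoneOn (fun t => x t - γ * G y * t) (Set.Ici 0) := by
          apply helper_antitone (f' := fun t => γ * G (x t) - γ * G y)
          · intro t ht
            have h1 : HasDerivAt (fun s : ℝ => γ * G y * s) (γ * G y) t := by
              simpa using (hasDerivAt_id t).const_mul (γ * G y)
            exact (hx t ht).sub h1
          · intro t ht
            have := hymax (hmem t ht)
            simp only [Set.mem_setOf_eq] at this
            nlinarith
        set T := (xm - x 0) / (γ * G y) with hTdef
        have hgy : γ * G y < 0 := mul_neg_of_pos_of_neg hγ hδ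
        have hT : 0 ≤ T := div_nonneg_iff.2 (Or.inr ⟨by linarith, hgy.le⟩)
        have h := hA (Set.mem_Ici.2 (le_refl (0:ℝ))) (Set.mem_Ici.2 hT) hT
        simp only at h
        have hne0 : γ * G y ≠ 0 := ne_of_lt hgy
        have hTe : γ * G y * T = xm - x 0 := by
          rw [hTdef]; field_simp [hδ.ne]
        rw [hTe] at h
        have := hsign T hT
        linarith
    obtain ⟨T, hT0, hTε⟩ := key
    refine ⟨T, fun t ht => ?_⟩
    have := habs T t hT0 ht
    rw [Real.dist_eq]
    linarith
end

section
/- Let G(x) = g(x) + 6·L(x)⁴·(1 − L(x)⁴). Then G has exactly three real zeros: r₁ = x⁻ (the unique real root of g), and two further zeros r₂ and r₃ with r₂ ∈ (0.588, 0.589) and r₃ ∈ (0.877, 0.878); in particular both r₂ and r₃ lie in the open interval (0, 1). -/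
/-- The polynomial matching `G` on `[-1,1]`. -/
noncomputable def Fpl (x : ℝ) : ℝ :=
  3 * x - x ^ 3 - 3 + 3/8 * (x+1)^4 - 3/128 * (x+1)^8

noncomputable def hfun (t : ℝ) : ℝ := 2 - t + t^2/2 - t^6/16

lemma hfun_deriv (t : ℝ) : HasDerivAt hfun (-1 + t - 3/8 * t^5) t := by
  have h1 := ((((hasDerivAt_const t (2:ℝ)).sub (hasDerivAt_id t)).add
      ((hasDerivAt_pow 2 t).div_const 2)).sub ((hasDerivAt_pow 6 t).div_const 16))
  convert h1 using 1
  · rfl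
  · rfl
  · funext x; simp only [hfun, Pi.sub_apply, Pi.add_apply, id]
  push_cast; ring

lemma hfun_anti : StrictAntiOn hfun (Set.Icc (0:ℝ) 2) := by
  apply strictAntiOn_of_deriv_neg (convex_Icc 0 2)
  · intro x _; exact (hfun_deriv x).differentiableAt.continuousAt.continuousWithinAt
  · intro t ht
    rw [interior_Icc] at ht
    rw [(hfun_deriv t).deriv]
    nlinarith [pow_pos ht.1 5, sq_nonneg (t - 1), sq_nonneg (t^2 - 1),
      mul_nonneg (sq_nonneg (t-1)) ht.1.le, pow_nonneg ht.1.le 3,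
      mul_nonneg (mul_nonneg (sq_nonneg (t-1)) ht.1.le) ht.1.le]

lemma Fpl_deriv (x : ℝ) : HasDerivAt Fpl (3 * (x+1) * hfun (x+1)) x := by
  have A : HasDerivAt (fun x : ℝ => x + 1) 1 x := (hasDerivAt_id x).add_const 1
  have h1 : HasDerivAt (fun x : ℝ => 3 * x - x ^ 3 - 3 + 3/8 * (x+1)^4 - 3/128 * (x+1)^8)
      (3 * 1 - ↑3 * x^(3-1) - 0 + 3/8 * (↑4 * (x+1)^(4-1) * 1) - 3/128 * (↑8 * (x+1)^(8-1) * 1)) x := by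
    exact (((((hasDerivAt_id x).const_mul 3).sub (hasDerivAt_pow 3 x)).sub
      (hasDerivAt_const x 3)).add ((A.pow 4).const_mul (3/8))).sub ((A.pow 8).const_mul (3/128))
  convert h1 using 1
  · rfl
  unfold hfun; push_cast; ring

lemma Fpl_cont : Continuous Fpl := by
  unfold Fpl; continuity

lemma Fpl_mono {a b : ℝ} (ha : -1 ≤ a) (hb : b ≤ 1) (hh : 0 ≤ hfun (b+1)) :
    StrictMonoOn Fpl (Set.Icc a b) := by
  apply strictMonoOn_of_deriv_pos (convex_Icc a b) Fpl_cont.continuousOn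
  intro x hx
  rw [interior_Icc] at hx
  rw [(Fpl_deriv x).deriv]
  have h1 : 0 < x + 1 := by linarith [hx.1]
  have h2 : hfun (b+1) < hfun (x+1) := by
    exact hfun_anti ⟨by linarith [hx.1], by linarith [hx.2]⟩ ⟨by linarith [hx.2, h1], by linarith⟩
      (by linarith [hx.2])
  nlinarith

lemma Fpl_anti {a b : ℝ} (ha : -1 ≤ a) (hb : b ≤ 1) (hh : hfun (a+1) ≤ 0) :
    StrictAntiOn Fpl (Set.Icc a b) := by
  apply strictAntiOn_of_deriv_neg (convex_Icc a b) Fpl_cont.continuousOn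
  intro x hx
  rw [interior_Icc] at hx
  rw [(Fpl_deriv x).deriv]
  have h1 : 0 < x + 1 := by linarith [hx.1]
  have h2 : hfun (x+1) < hfun (a+1) := by
    exact hfun_anti ⟨by linarith, by linarith [hx.1, hx.2]⟩ ⟨by linarith [hx.1], by linarith [hx.2]⟩
      (by linarith [hx.1])
  nlinarith

-- numeric sign facts
lemma F588 : Fpl 0.588 < 0 := by unfold Fpl; norm_num
lemma F589 : 0 < Fpl 0.589 := by unfold Fpl; norm_num
lemma F877 : 0 < Fpl 0.877 := by unfold Fpl; norm_num
lemma F878 : Fpl 0.878 < 0 := by unfold Fpl; norm_num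
lemma h1589 : 0 ≤ hfun (0.589 + 1) := by unfold hfun; norm_num
lemma h1877 : hfun (0.877 + 1) ≤ 0 := by unfold hfun; norm_num

lemma gneg {x : ℝ} (hx : -1 ≤ x) : gcub x < 0 := by
  unfold gcub
  nlinarith [mul_nonneg (sq_nonneg (x-1)) (by linarith : (0:ℝ) ≤ x + 2)]

/-- equation (19) of the paper: the function
`G(x) = g(x) + 6 L(x)⁴ (1 - L(x)⁴)` has exactly three real zeros:
`r₁ = x⁻` (the unique real root of `g`), `r₂ ∈ (0.588, 0.589)` and
`r₃ ∈ (0.877, 0.878)`; in particular `r₂, r₃ ∈ (0, 1)`. -/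
theorem stmt_16 (xm : ℝ) (hxm : gcub xm = 0) (hxmu : ∀ z, gcub z = 0 → z = xm)
    (G : ℝ → ℝ) (hG : ∀ x, G x = gcub x + 6 * (Lpl x) ^ 4 * (1 - (Lpl x) ^ 4)) :
    ∃ r2 r3 : ℝ,
      (0.588 < r2 ∧ r2 < 0.589) ∧ (0.877 < r3 ∧ r3 < 0.878) ∧
      (0 < r2 ∧ r2 < 1) ∧ (0 < r3 ∧ r3 < 1) ∧
      G xm = 0 ∧ G r2 = 0 ∧ G r3 = 0 ∧
      (∀ z : ℝ, G z = 0 → z = xm ∨ z = r2 ∨ z = r3) := by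
  -- G agrees with Fpl on [-1, 1]
  have hGF : ∀ x : ℝ, -1 ≤ x → x ≤ 1 → G x = Fpl x := by
    intro x h1 h2
    rw [hG]
    rcases le_or_gt x (-1) with hle | hgt
    · have hx : x = -1 := le_antisymm hle h1
      subst hx
      simp only [Lpl, if_pos (le_refl (-1:ℝ))]
      unfold gcub Fpl; norm_num
    · rcases lt_or_ge x 1 with hlt | hge
      · simp only [Lpl, if_neg (not_le.mpr hgt), if_pos hlt]
        unfold gcub Fpl; ring
      · have hx : x = 1 := le_antisymm h2 hge
        subst hx
        simp only [Lpl, if_neg (by norm_num : ¬(1:ℝ) ≤ -1), if_neg (lt_irrefl (1:ℝ))]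
        unfold gcub Fpl; norm_num
  -- xm < -1
  have hxml : xm < -1 := by
    by_contra hc
    push_neg at hc
    exact absurd hxm (ne_of_lt (gneg hc))
  have hGxm : G xm = 0 := by
    rw [hG]
    have : Lpl xm = 0 := by simp [Lpl, hxml.le]
    rw [this]
    simpa using hxm
  -- existence of r2
  obtain ⟨r2, hr2m, hr2⟩ := intermediate_value_Ioo (by norm_num : (0.588:ℝ) ≤ 0.589)
    Fpl_cont.continuousOn (Set.mem_Ioo.mpr ⟨F588, F589⟩)
  obtain ⟨r3, hr3m, hr3⟩ := intermediate_value_Ioo' (by norm_num : (0.877:ℝ) ≤ 0.878)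
    Fpl_cont.continuousOn (Set.mem_Ioo.mpr ⟨F878, F877⟩)
  obtain ⟨hr2a, hr2b⟩ := hr2m
  obtain ⟨hr3a, hr3b⟩ := hr3m
  have hr2n : (0.588:ℝ) < r2 ∧ r2 < 0.589 := ⟨hr2a, hr2b⟩
  have hr3n : (0.877:ℝ) < r3 ∧ r3 < 0.878 := ⟨hr3a, hr3b⟩
  have hr2I : -1 ≤ r2 ∧ r2 ≤ 1 := ⟨by nlinarith, by nlinarith⟩
  have hr3I : -1 ≤ r3 ∧ r3 ≤ 1 := ⟨by nlinarith, by nlinarith⟩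
  have monoL : StrictMonoOn Fpl (Set.Icc (-1 : ℝ) 0.589) := Fpl_mono le_rfl (by norm_num) h1589
  have antiR : StrictAntiOn Fpl (Set.Icc (0.877 : ℝ) 1) := Fpl_anti (by norm_num) le_rfl h1877
  refine ⟨r2, r3, hr2n, hr3n, ⟨by nlinarith, by nlinarith⟩, ⟨by nlinarith, by nlinarith⟩,
    hGxm, by rw [hGF r2 hr2I.1 hr2I.2]; exact hr2, by rw [hGF r3 hr3I.1 hr3I.2]; exact hr3, ?_⟩
  intro z hz
  rcases le_or_gt z (-1) with hz1 | hz1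
  · left
    apply hxmu
    rw [hG] at hz
    have : Lpl z = 0 := by simp [Lpl, hz1]
    rw [this] at hz
    simpa using hz
  rcases le_or_gt 1 z with hz2 | hz2
  · left
    apply hxmu
    rw [hG] at hz
    have : Lpl z = 1 := by
      simp [Lpl, not_le.mpr (by linarith : (-1:ℝ) < z), not_lt.mpr hz2]
    rw [this] at hz
    simpa using hz
  -- now -1 < z < 1
  have hFz : Fpl z = 0 := by rw [← hGF z hz1.le hz2.le]; exact hz
  rcases le_or_gt z 0.589 with hc1 | hc1
  · right; left
    exact monoL.injOn ⟨hz1.le, hc1⟩ ⟨hr2I.1, hr2b.le⟩ (hFz.trans hr2.symm)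
  rcases le_or_gt 0.877 z with hc2 | hc2
  · right; right
    exact antiR.injOn ⟨hc2, hz2.le⟩ ⟨hr3a.le, hr3I.2⟩ (hFz.trans hr3.symm)
  -- 0.589 < z < 0.877 : contradiction, Fpl z > 0
  exfalso
  rcases le_or_gt 0 (hfun (z + 1)) with hh | hh
  · have mono2 : StrictMonoOn Fpl (Set.Icc (-1 : ℝ) z) :=
      Fpl_mono le_rfl hz2.le hh
    have : Fpl 0.589 < Fpl z :=
      mono2 ⟨by norm_num, hc1.le⟩ ⟨by linarith, le_rfl⟩ hc1
    linarith [F589]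
  · have anti2 : StrictAntiOn Fpl (Set.Icc z (1 : ℝ)) :=
      Fpl_anti (by linarith) le_rfl hh.le
    have : Fpl 0.877 < Fpl z :=
      anti2 ⟨le_rfl, hz2.le⟩ ⟨hc2.le, by norm_num⟩ hc2
    linarith [F877]
end

section
/- The only point (x₁, x₂) ∈ ℝ² satisfying g(x₁) + 6·(1 − L(x₂)) = 0 and g(x₂) + 6·L(x₁) = 0 is the origin (0, 0). That is, the planar system ẋ₁ = g(x₁) + 6(1 − L(x₂)), ẋ₂ = g(x₂) + 6L(x₁) has a unique equilibrium, located at the origin. -/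
/-- Section 5.2 of the paper: the planar system
`ẋ₁ = g(x₁) + 6(1 - L(x₂))`, `ẋ₂ = g(x₂) + 6 L(x₁)` has a unique
equilibrium, located at the origin. -/
theorem stmt_17 :
    ∀ x1 x2 : ℝ,
      (gcub x1 + 6 * (1 - Lpl x2) = 0 ∧ gcub x2 + 6 * Lpl x1 = 0) ↔
      (x1 = 0 ∧ x2 = 0) := by
  intro x1 x2
  constructor
  · rintro ⟨h1, h2⟩
    unfold gcub Lpl at h1 h2
    split_ifs at h1 h2 with ha hb hc hd <;>
      first
      | (exfalso; nlinarith [sq_nonneg (x1 - 1), sq_nonneg (x1 + 1),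
          sq_nonneg (x2 - 1), sq_nonneg (x2 + 1)])
      | skip
    -- remaining: middle-middle case
    have e1 : 3 * x1 - x1 ^ 3 - 3 * x2 = 0 := by linarith
    have e2 : 3 * x2 - x2 ^ 3 + 3 * x1 = 0 := by linarith
    have e : 3 * x1 ^ 2 - x1 ^ 4 + 3 * x2 ^ 2 - x2 ^ 4 = 0 := by
      linear_combination x1 * e1 + x2 * e2
    have hx1 : x1 ^ 2 = 0 := by
      nlinarith [sq_nonneg x1, sq_nonneg x2, sq_nonneg (x1 ^ 2), sq_nonneg (x2 ^ 2),
        mul_pos (by linarith : (0:ℝ) < 1 - x1) (by linarith : (0:ℝ) < 1 + x1),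
        mul_pos (by linarith : (0:ℝ) < 1 - x2) (by linarith : (0:ℝ) < 1 + x2)]
    have hx1' : x1 = 0 := by
      have := sq_eq_zero_iff.mp hx1
      simpa using this
    refine ⟨hx1', ?_⟩
    subst hx1'
    nlinarith [e1]
  · rintro ⟨rfl, rfl⟩
    norm_num [gcub, Lpl]
end

section
/- Let γ > 0 and let Q : ℝ → ℝ be any continuous function with 0 ≤ Q(x) ≤ 1 for all x, Q(x) = 1 for x ≤ −1, and Q(x) = 0 for x ≥ 1 (a continuous conversion of the one-dimensional copy-negation function f(s) = ¬s). Let x : [0,∞) → ℝ be differentiable with ẋ(t) = γ·(g(x(t)) + 6·Q(x(t))) for all t ≥ 0. Then the discretized state (0 if x(t) ≤ 0, 1 if x(t) > 0) changes value at most once: there do not exist times 0 ≤ t₁ < t₂ < t₃ such that either (x(t₁) ≤ 0 and x(t₂) > 0 and x(t₃) ≤ 0) or (x(t₁) > 0 and x(t₂) ≤ 0 and x(t₃) > 0). In particular no trajectory of D₁(f,γ,Q) can track the Boolean trajectory 0 ↦ 1 ↦ 0 ↦ 1 ↦ ⋯ of copy-negation. -/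
open Set Filter Topology


/-- First time in `(a,b]` at which a continuous function descends to level `y`. -/
lemma hit_first {f : ℝ → ℝ} {a b y : ℝ} (hab : a < b)
    (hc : ContinuousOn f (Icc a b)) (hya : y < f a) (hyb : f b ≤ y) :
    ∃ s ∈ Ioc a b, f s = y ∧ ∀ t ∈ Ico a s, y < f t := by
  set S : Set ℝ := Icc a b ∩ f ⁻¹' Iic y with hSdef
  have hSne : S.Nonempty := ⟨b, ⟨hab.le, le_refl b⟩, hyb⟩
  have hSclosed : IsClosed S := hc.preimage_isClosed_of_isClosed isClosed_Icc isClosed_Iic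
  have hSbdd : BddBelow S := ⟨a, fun t ht => ht.1.1⟩
  set s := sInf S with hs
  have hsS : s ∈ S := hSclosed.csInf_mem hSne hSbdd
  have hsb : s ≤ b := hsS.1.2
  have hlt : ∀ t ∈ Ico a s, y < f t := by
    intro t ht
    by_contra h
    push_neg at h
    exact absurd (csInf_le hSbdd ⟨⟨ht.1, ht.2.le.trans hsb⟩, h⟩) (not_le.mpr ht.2)
  have has : a < s := by
    rcases lt_or_eq_of_le hsS.1.1 with h | h
    · exact h
    · exact absurd hsS.2 (not_le.mpr (h ▸ hya))
  have hge : y ≤ f s := by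
    have hcw : ContinuousWithinAt f (Ico a s) s :=
      (hc.continuousWithinAt hsS.1).mono (fun t ht => ⟨ht.1, ht.2.le.trans hsb⟩)
    have htend : Tendsto f (𝓝[<] s) (𝓝 (f s)) := by
      rwa [ContinuousWithinAt, nhdsWithin_Ico_eq_nhdsLT has] at hcw
    refine ge_of_tendsto htend ?_
    have : Ico a s ∈ 𝓝[<] s := by
      rw [← nhdsWithin_Ico_eq_nhdsLT has]; exact self_mem_nhdsWithin
    filter_upwards [this] with t ht
    exact (hlt t ht).le
  exact ⟨s, ⟨has, hsb⟩, le_antisymm hsS.2 hge, hlt⟩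

/-- Last time in `[a,b)` at which a continuous function is at level `y` before ascending. -/
lemma hit_last {f : ℝ → ℝ} {a b y : ℝ} (hab : a < b)
    (hc : ContinuousOn f (Icc a b)) (hya : f a ≤ y) (hyb : y < f b) :
    ∃ s ∈ Ico a b, f s = y ∧ ∀ t ∈ Ioc s b, y < f t := by
  set S : Set ℝ := Icc a b ∩ f ⁻¹' Iic y with hSdef
  have hSne : S.Nonempty := ⟨a, ⟨le_refl a, hab.le⟩, hya⟩
  have hSclosed : IsClosed S := hc.preimage_isClosed_of_isClosed isClosed_Icc isClosed_Iic
  have hSbdd : BddAbove S := ⟨b, fun t ht => ht.1.2⟩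
  set s := sSup S with hs
  have hsS : s ∈ S := hSclosed.csSup_mem hSne hSbdd
  have hsa : a ≤ s := hsS.1.1
  have hlt : ∀ t ∈ Ioc s b, y < f t := by
    intro t ht
    by_contra h
    push_neg at h
    exact absurd (le_csSup hSbdd ⟨⟨hsa.trans ht.1.le, ht.2⟩, h⟩) (not_le.mpr ht.1)
  have hsb : s < b := by
    rcases lt_or_eq_of_le hsS.1.2 with h | h
    · exact h
    · exact absurd hsS.2 (not_le.mpr (h ▸ hyb))
  have hge : y ≤ f s := by
    have hcw : ContinuousWithinAt f (Ioc s b) s :=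
      (hc.continuousWithinAt hsS.1).mono (fun t ht => ⟨hsa.trans ht.1.le, ht.2⟩)
    have htend : Tendsto f (𝓝[>] s) (𝓝 (f s)) := by
      rwa [ContinuousWithinAt, nhdsWithin_Ioc_eq_nhdsGT hsb] at hcw
    refine ge_of_tendsto htend ?_
    have : Ioc s b ∈ 𝓝[>] s := by
      rw [← nhdsWithin_Ioc_eq_nhdsGT hsb]; exact self_mem_nhdsWithin
    filter_upwards [this] with t ht
    exact (hlt t ht).le
  exact ⟨s, ⟨hsa, hsb⟩, le_antisymm hsS.2 hge, hlt⟩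

/-- If `f` is strictly above `f s` on some left neighbourhood `[a,s)`, the derivative at `s`
is nonpositive. -/
lemma deriv_nonpos_left {f : ℝ → ℝ} {s d a : ℝ} (hd : HasDerivAt f d s) (has : a < s)
    (h : ∀ t ∈ Ico a s, f s < f t) : d ≤ 0 := by
  have h2 : Tendsto (slope f s) (𝓝[Iio s \ {s}] s) (𝓝 d) :=
    hasDerivWithinAt_iff_tendsto_slope.mp hd.hasDerivWithinAt
  rw [show Iio s \ {s} = Iio s from Set.diff_singleton_eq_self (fun hmem => lt_irrefl s hmem)] at h2
  refine le_of_tendsto h2 ?_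
  have : Ico a s ∈ 𝓝[<] s := by
    rw [← nhdsWithin_Ico_eq_nhdsLT has]; exact self_mem_nhdsWithin
  filter_upwards [this, self_mem_nhdsWithin] with t ht ht'
  have h1 : 0 ≤ f t - f s := sub_nonneg.mpr (h t ht).le
  have h2 : t - s < 0 := sub_neg.mpr ht'
  rw [slope_def_field]
  exact div_nonpos_of_nonneg_of_nonpos h1 h2.le

/-- If `f` is strictly above `f s` on some right neighbourhood `(s,b]`, the derivative at `s`
is nonnegative. -/
lemma deriv_nonneg_right {f : ℝ → ℝ} {s d b : ℝ} (hd : HasDerivAt f d s) (hsb : s < b)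
    (h : ∀ t ∈ Ioc s b, f s < f t) : 0 ≤ d := by
  have h2 : Tendsto (slope f s) (𝓝[Ioi s \ {s}] s) (𝓝 d) :=
    hasDerivWithinAt_iff_tendsto_slope.mp hd.hasDerivWithinAt
  rw [show Ioi s \ {s} = Ioi s from Set.diff_singleton_eq_self (fun hmem => lt_irrefl s hmem)] at h2
  refine ge_of_tendsto h2 ?_
  have : Ioc s b ∈ 𝓝[>] s := by
    rw [← nhdsWithin_Ioc_eq_nhdsGT hsb]; exact self_mem_nhdsWithin
  filter_upwards [this, self_mem_nhdsWithin] with t ht ht'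
  have h1 : 0 ≤ f t - f s := sub_nonneg.mpr (h t ht).le
  have h2 : 0 < t - s := sub_pos.mpr ht'
  rw [slope_def_field]
  exact div_nonneg h1 h2.le

/-- A solution of a scalar autonomous ODE cannot go from `≤ 0` up above `0` and back. -/
lemma no_updown {F : ℝ → ℝ} (hF : Continuous F) {x : ℝ → ℝ}
    (hx : ∀ t, 0 ≤ t → HasDerivAt x (F (x t)) t)
    {a b c : ℝ} (ha : 0 ≤ a) (hab : a < b) (hbc : b < c)
    (h1 : x a ≤ 0) (h2 : 0 < x b) (h3 : x c ≤ 0) : False := by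
  have hcx : ContinuousOn x (Icc a c) := fun t ht =>
    ((hx t (ha.trans ht.1)).continuousAt).continuousWithinAt
  obtain ⟨m, hmIcc, hm⟩ :=
    isCompact_Icc.exists_isMaxOn (nonempty_Icc.mpr (hab.trans hbc).le) hcx
  have hbm : x b ≤ x m := hm ⟨hab.le, hbc.le⟩
  have hm0 : 0 < x m := lt_of_lt_of_le h2 hbm
  have ham : a < m := hmIcc.1.lt_of_ne (fun h => absurd (h ▸ h1) (not_le.mpr hm0))
  have hmc : m < c := hmIcc.2.lt_of_ne (fun h => absurd (h ▸ h3) (not_le.mpr hm0))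
  have hcx1 : ContinuousOn x (Icc a m) := hcx.mono (Icc_subset_Icc le_rfl hmIcc.2)
  have hcx2 : ContinuousOn x (Icc m c) := hcx.mono (Icc_subset_Icc hmIcc.1 le_rfl)
  have claim : ∀ y ∈ Ioo 0 (x m), F y = 0 := by
    intro y hy
    by_contra hFy
    rcases lt_or_gt_of_ne hFy with hneg | hpos
    · -- ascent on [a, m] through y
      obtain ⟨s, hsIco, hxs, hgt⟩ := hit_last ham hcx1 (h1.trans hy.1.le) hy.2
      have hd := hx s (ha.trans hsIco.1)
      have h0 := deriv_nonneg_right hd hsIco.2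
        (fun t ht => by rw [hxs]; exact hgt t ht)
      rw [hxs] at h0
      exact absurd h0 (not_le.mpr hneg)
    · -- descent on [m, c] through y
      obtain ⟨s, hsIoc, hxs, hgt⟩ := hit_first hmc hcx2 hy.2 (h3.trans hy.1.le)
      have hd := hx s (ha.trans (hmIcc.1.trans hsIoc.1.le))
      have h0 := deriv_nonpos_left hd hsIoc.1
        (fun t ht => by rw [hxs]; exact hgt t ht)
      rw [hxs] at h0
      exact absurd h0 (not_le.mpr hpos)
  have Fzero : ∀ y ∈ Icc 0 (x m), F y = 0 := by
    intro y hy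
    have hcl : closure (Ioo 0 (x m)) ⊆ {y : ℝ | F y = 0} :=
      (isClosed_eq hF continuous_const).closure_subset_iff.mpr claim
    have : y ∈ closure (Ioo 0 (x m)) := by
      rw [closure_Ioo (ne_of_lt hm0)]; exact hy
    exact hcl this
  obtain ⟨u, huIco, hxu, hugt⟩ := hit_last ham hcx1 h1 hm0
  obtain ⟨v, hvIoc, hxv, hvgt⟩ := hit_first hmc hcx2 hm0 h3
  have huv : u < v := huIco.2.trans hvIoc.1
  have hmem : ∀ t ∈ Icc u v, x t ∈ Icc 0 (x m) := by
    intro t ht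
    have htac : t ∈ Icc a c :=
      ⟨huIco.1.trans ht.1, ht.2.trans (hvIoc.2)⟩
    refine ⟨?_, hm htac⟩
    rcases ht.1.eq_or_lt with h | h
    · rw [← h, hxu]
    · rcases le_or_gt t m with h' | h'
      · exact (hugt t ⟨h, h'⟩).le
      · rcases ht.2.eq_or_lt with h'' | h''
        · rw [h'', hxv]
        · exact (hvgt t ⟨h'.le, h''⟩).le
  have hconst := constant_of_has_deriv_right_zero
    (f := x) (a := u) (b := v)
    (hcx.mono (Icc_subset_Icc (huIco.1) (hvIoc.2)))
    (fun t ht => by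
      have hd := (hx t (ha.trans (huIco.1.trans ht.1))).hasDerivWithinAt (s := Ici t)
      rwa [Fzero (x t) (hmem t ⟨ht.1, ht.2.le⟩)] at hd)
  have hxm := hconst m ⟨huIco.2.le, hvIoc.1.le⟩
  rw [hxu] at hxm
  exact absurd hxm (ne_of_gt hm0)

/-- A solution of a scalar autonomous ODE cannot go from `> 0` down to `≤ 0` and back. -/
lemma no_downup {F : ℝ → ℝ} (hF : Continuous F) {x : ℝ → ℝ}
    (hx : ∀ t, 0 ≤ t → HasDerivAt x (F (x t)) t)
    {a b c : ℝ} (ha : 0 ≤ a) (hab : a < b) (hbc : b < c)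
    (h1 : 0 < x a) (h2 : x b ≤ 0) (h3 : 0 < x c) : False := by
  have hcx : ContinuousOn x (Icc a c) := fun t ht =>
    ((hx t (ha.trans ht.1)).continuousAt).continuousWithinAt
  obtain ⟨m, hmIcc, hm⟩ :=
    isCompact_Icc.exists_isMinOn (nonempty_Icc.mpr (hab.trans hbc).le) hcx
  have hbm : x m ≤ x b := hm ⟨hab.le, hbc.le⟩
  have hm0 : x m ≤ 0 := hbm.trans h2
  have ham : a < m := hmIcc.1.lt_of_ne (fun h => absurd (h ▸ h1) (not_lt.mpr hm0))
  have hmc : m < c := hmIcc.2.lt_of_ne (fun h => absurd (h ▸ h3) (not_lt.mpr hm0))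
  have hcx1 : ContinuousOn x (Icc a m) := hcx.mono (Icc_subset_Icc le_rfl hmIcc.2)
  have hcx2 : ContinuousOn x (Icc m c) := hcx.mono (Icc_subset_Icc hmIcc.1 le_rfl)
  set y₀ : ℝ := min (x a) (x c) with hy₀def
  have hy₀ : 0 < y₀ := lt_min h1 h3
  have claim : ∀ y ∈ Ioo 0 y₀, F y = 0 := by
    intro y hy
    by_contra hFy
    rcases lt_or_gt_of_ne hFy with hneg | hpos
    · -- ascent on [m, c] through y
      obtain ⟨s, hsIco, hxs, hgt⟩ := hit_last hmc hcx2 (hm0.trans hy.1.le)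
        (hy.2.trans_le (min_le_right _ _))
      have hd := hx s (ha.trans (hmIcc.1.trans hsIco.1))
      have h0 := deriv_nonneg_right hd hsIco.2
        (fun t ht => by rw [hxs]; exact hgt t ht)
      rw [hxs] at h0
      exact absurd h0 (not_le.mpr hneg)
    · -- descent on [a, m] through y
      obtain ⟨s, hsIoc, hxs, hgt⟩ := hit_first ham hcx1
        (hy.2.trans_le (min_le_left _ _)) (hm0.trans hy.1.le)
      have hd := hx s (ha.trans hsIoc.1.le)
      have h0 := deriv_nonpos_left hd hsIoc.1
        (fun t ht => by rw [hxs]; exact hgt t ht)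
      rw [hxs] at h0
      exact absurd h0 (not_le.mpr hpos)
  have Fzero : ∀ y ∈ Icc 0 y₀, F y = 0 := by
    intro y hy
    have hcl : closure (Ioo 0 y₀) ⊆ {y : ℝ | F y = 0} :=
      (isClosed_eq hF continuous_const).closure_subset_iff.mpr claim
    have : y ∈ closure (Ioo 0 y₀) := by
      rw [closure_Ioo (ne_of_lt hy₀)]; exact hy
    exact hcl this
  -- last time in [a, m] at which x = y₀ (via -x)
  obtain ⟨u, huIco, hxu, hugt⟩ := hit_last (f := fun t => -x t) ham hcx1.neg
    (y := -y₀) (neg_le_neg (min_le_left _ _)) (by simpa using lt_of_le_of_lt hm0 hy₀)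
  have hxu' : x u = y₀ := by have := hxu; simpa [neg_eq_iff_eq_neg] using this
  have hult : ∀ t ∈ Ioc u m, x t < y₀ := by
    intro t ht
    have := hugt t ht
    simpa using this
  -- first time after u at which x = 0
  have hum : u < m := huIco.2
  obtain ⟨v, hvIoc, hxv, hvgt⟩ := hit_first hum
    (hcx1.mono (Icc_subset_Icc huIco.1 le_rfl)) (by rw [hxu']; exact hy₀) hm0
  have hmem : ∀ t ∈ Icc u v, x t ∈ Icc 0 y₀ := by
    intro t ht
    constructor
    · rcases ht.2.eq_or_lt with h | h
      · rw [h, hxv]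
      · exact (hvgt t ⟨ht.1, h⟩).le
    · rcases ht.1.eq_or_lt with h | h
      · rw [← h, hxu']
      · exact (hult t ⟨h, ht.2.trans hvIoc.2⟩).le
  have hconst := constant_of_has_deriv_right_zero
    (f := x) (a := u) (b := v)
    (hcx1.mono (Icc_subset_Icc huIco.1 (hvIoc.2)))
    (fun t ht => by
      have hd := (hx t (ha.trans (huIco.1.trans ht.1))).hasDerivWithinAt (s := Ici t)
      rwa [Fzero (x t) (hmem t ⟨ht.1, ht.2.le⟩)] at hd)
  have hxm := hconst v ⟨hvIoc.1.le, le_rfl⟩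
  rw [hxu', hxv] at hxm
  exact absurd hxm.symm (ne_of_gt hy₀)

/-- Section 5.2 of the paper: for any continuous conversion
`Q` of the one-dimensional copy-negation function (`Q = 1` on `(-∞,-1]`,
`Q = 0` on `[1,∞)`, values in `[0,1]`) and any `γ > 0`, the discretized state
of a solution of `ẋ = γ (g(x) + 6 Q(x))` changes value at most once; in
particular no trajectory of `D₁(¬, γ, Q)` can track `0 ↦ 1 ↦ 0 ↦ 1 ↦ ⋯`. -/
theorem stmt_18 (γ : ℝ) (hγ : 0 < γ)
    (Q : ℝ → ℝ) (hQc : Continuous Q) (hQ01 : ∀ z, Q z ∈ Set.Icc (0 : ℝ) 1)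
    (hQ0 : ∀ z : ℝ, z ≤ -1 → Q z = 1) (hQ1 : ∀ z : ℝ, 1 ≤ z → Q z = 0)
    (x : ℝ → ℝ)
    (hx : ∀ t : ℝ, 0 ≤ t → HasDerivAt x (γ * (gcub (x t) + 6 * Q (x t))) t) :
    ¬ ∃ t1 t2 t3 : ℝ, 0 ≤ t1 ∧ t1 < t2 ∧ t2 < t3 ∧
      ((x t1 ≤ 0 ∧ 0 < x t2 ∧ x t3 ≤ 0) ∨
       (0 < x t1 ∧ x t2 ≤ 0 ∧ 0 < x t3)) := by
  rintro ⟨t1, t2, t3, ht1, h12, h23, hcase⟩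
  set F : ℝ → ℝ := fun y => γ * (gcub y + 6 * Q y) with hFdef
  have hg : Continuous gcub := by unfold gcub; continuity
  have hF : Continuous F := continuous_const.mul (hg.add (continuous_const.mul hQc))
  have hx' : ∀ t, 0 ≤ t → HasDerivAt x (F (x t)) t := hx
  rcases hcase with ⟨ha, hb, hc⟩ | ⟨ha, hb, hc⟩
  · exact no_updown hF hx' ht1 h12 h23 ha hb hc
  · exact no_downup hF hx' ht1 h12 h23 ha hb hc
end
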